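/- Let A be a symmetric complex 2×2 matrix with Re(A ξ·ξ) ≥ ε₋|ξ|² and Im(A ξ·ξ) ≥ 0 for all ξ ∈ ℝ², with ε₋ > 0. Then A is invertible, and A⁻¹ satisfies Re(A⁻¹ ζ · conj(ζ)) ≥ c|ζ|² for all ζ ∈ ℂ² for some c > 0 depending only on ε₋ and ‖A‖. -/

import Mathlib

open Matrix

lemma coerc (A : Matrix (Fin 2) (Fin 2) ℂ) (hsymm : A.IsSymm) (εm : ℝ)
    (hre : ∀ ξ : Fin 2 → ℝ,
      εm * (ξ 0 ^ 2 + ξ 1 ^ 2) ≤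
        (dotProduct (A.mulVec fun i => (ξ i : ℂ)) fun i => (ξ i : ℂ)).re)
    (z : Fin 2 → ℂ) :
    εm * (‖z 0‖ ^ 2 + ‖z 1‖ ^ 2) ≤
      (dotProduct (A.mulVec z) fun i => star (z i)).re := by
  have hx := hre fun i => (z i).re
  have hy := hre fun i => (z i).im
  have hs : A 1 0 = A 0 1 := hsymm.apply 0 1
  simp only [dotProduct, Matrix.mulVec, Fin.sum_univ_two, Complex.add_re,
    Complex.mul_re, Complex.mul_im, Complex.add_im, Complex.ofReal_re, Complex.ofReal_im,
    RCLike.star_def, Complex.conj_re, Complex.conj_im, Complex.sq_norm,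
    Complex.normSq_apply] at hx hy ⊢
  rw [hs] at hx hy ⊢
  ring_nf at hx hy ⊢
  nlinarith [hx, hy]

/-- A symmetric complex 2×2 matrix whose quadratic form on real vectors has
real part bounded below by `ε₋|ξ|²` and nonnegative imaginary part is
invertible, and its inverse is coercive on `ℂ²`. -/
theorem stmt11 (A : Matrix (Fin 2) (Fin 2) ℂ) (hsymm : A.IsSymm)
    (εm : ℝ) (hεm : 0 < εm)
    (hre : ∀ ξ : Fin 2 → ℝ,
      εm * (ξ 0 ^ 2 + ξ 1 ^ 2) ≤
        (dotProduct (A.mulVec fun i => (ξ i : ℂ)) fun i => (ξ i : ℂ)).re)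
    (him : ∀ ξ : Fin 2 → ℝ,
      0 ≤ (dotProduct (A.mulVec fun i => (ξ i : ℂ)) fun i => (ξ i : ℂ)).im) :
    IsUnit A ∧
    ∃ c : ℝ, 0 < c ∧ ∀ ζ : Fin 2 → ℂ,
      c * (‖ζ 0‖ ^ 2 + ‖ζ 1‖ ^ 2) ≤
        (dotProduct (A⁻¹.mulVec ζ) fun i => star (ζ i)).re := by
  -- invertibility
  have hdet : A.det ≠ 0 := by
    intro h0
    obtain ⟨v, hv, hAv⟩ := (Matrix.exists_mulVec_eq_zero_iff).2 h0
    have key := coerc A hsymm εm hre v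
    rw [hAv] at key
    simp only [zero_dotProduct, Complex.zero_re] at key
    have h0' : ‖v 0‖ ^ 2 + ‖v 1‖ ^ 2 ≤ 0 := by
      nlinarith [key, sq_nonneg (‖v 0‖), sq_nonneg (‖v 1‖)]
    have hv0 : v 0 = 0 := by
      have := sq_nonneg (‖v 1‖)
      have : ‖v 0‖ ^ 2 ≤ 0 := by linarith
      have : ‖v 0‖ = 0 := by nlinarith [norm_nonneg (v 0)]
      simpa using this
    have hv1 : v 1 = 0 := by
      have := sq_nonneg (‖v 0‖)
      have : ‖v 1‖ ^ 2 ≤ 0 := by linarith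
      have : ‖v 1‖ = 0 := by nlinarith [norm_nonneg (v 1)]
      simpa using this
    apply hv
    funext i
    fin_cases i <;> simpa [hv0, hv1]
  have hunit : IsUnit A := (Matrix.isUnit_iff_isUnit_det A).2 (isUnit_iff_ne_zero.2 hdet)
  refine ⟨hunit, ?_⟩
  -- entry bound
  set a := ‖A 0 0‖ with ha
  set b := ‖A 0 1‖ with hb
  set c' := ‖A 1 0‖ with hc'
  set d := ‖A 1 1‖ with hd
  set M : ℝ := a ^ 2 + b ^ 2 + c' ^ 2 + d ^ 2 with hM
  have haεm : εm ≤ a := by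
    have h := hre ![1, 0]
    simp only [dotProduct, Matrix.mulVec, Fin.sum_univ_two] at h
    norm_num at h
    calc εm ≤ (A 0 0).re := h
    _ ≤ a := Complex.re_le_norm _
  have hMpos : 0 < M := by
    have := sq_nonneg b; have := sq_nonneg c'; have := sq_nonneg d
    nlinarith [haεm, hεm]
  refine ⟨εm / M, div_pos hεm hMpos, ?_⟩
  intro ζ
  set z := A⁻¹.mulVec ζ with hz
  have hAz : A.mulVec z = ζ := by
    rw [hz, Matrix.mulVec_mulVec, Matrix.mul_nonsing_inv A (isUnit_iff_ne_zero.2 hdet), Matrix.one_mulVec]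
  have key := coerc A hsymm εm hre z
  rw [hAz] at key
  -- Re(z ⬝ star ζ) = Re(ζ ⬝ star z)
  have hswap : (dotProduct z fun i => star (ζ i)).re
      = (dotProduct ζ fun i => star (z i)).re := by
    simp only [dotProduct, Fin.sum_univ_two, Complex.add_re, Complex.mul_re,
      RCLike.star_def, Complex.conj_re, Complex.conj_im]
    ring
  rw [hswap]
  -- bound |ζ|² ≤ M |z|²
  have habs0 : ‖ζ 0‖ ≤ a * ‖z 0‖ + b * ‖z 1‖ := by
    rw [← hAz]
    simp only [Matrix.mulVec, dotProduct, Fin.sum_univ_two]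
    calc ‖A 0 0 * z 0 + A 0 1 * z 1‖
        ≤ ‖A 0 0 * z 0‖ + ‖A 0 1 * z 1‖ := norm_add_le _ _
      _ = a * ‖z 0‖ + b * ‖z 1‖ := by rw [norm_mul, norm_mul]
  have habs1 : ‖ζ 1‖ ≤ c' * ‖z 0‖ + d * ‖z 1‖ := by
    rw [← hAz]
    simp only [Matrix.mulVec, dotProduct, Fin.sum_univ_two]
    calc ‖A 1 0 * z 0 + A 1 1 * z 1‖
        ≤ ‖A 1 0 * z 0‖ + ‖A 1 1 * z 1‖ := norm_add_le _ _
      _ = c' * ‖z 0‖ + d * ‖z 1‖ := by rw [norm_mul, norm_mul]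
  set s0 := ‖z 0‖
  set s1 := ‖z 1‖
  have hs0 : 0 ≤ s0 := norm_nonneg _
  have hs1 : 0 ≤ s1 := norm_nonneg _
  have hζbd : ‖ζ 0‖ ^ 2 + ‖ζ 1‖ ^ 2 ≤ M * (s0 ^ 2 + s1 ^ 2) := by
    have h0 : ‖ζ 0‖ ^ 2 ≤ (a * s0 + b * s1) ^ 2 := by
      have := norm_nonneg (ζ 0); nlinarith [habs0]
    have h1 : ‖ζ 1‖ ^ 2 ≤ (c' * s0 + d * s1) ^ 2 := by
      have := norm_nonneg (ζ 1); nlinarith [habs1]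
    nlinarith [sq_nonneg (a * s1 - b * s0), sq_nonneg (c' * s1 - d * s0)]
  calc εm / M * (‖ζ 0‖ ^ 2 + ‖ζ 1‖ ^ 2)
      ≤ εm / M * (M * (s0 ^ 2 + s1 ^ 2)) := by
        apply mul_le_mul_of_nonneg_left hζbd (le_of_lt (div_pos hεm hMpos))
    _ = εm * (s0 ^ 2 + s1 ^ 2) := by field_simp
    _ ≤ _ := key
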